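/- Let t be a positive integer, r a positive integer, g ∈ {0,1}, and x, y integers. Set Ξ = 4(i√t + 1)·(x − i√t·y)^4 ∈ ℂ (so that Ξ = ξ(x,y)^4 and Ξ − η(x,y)^4 = 8·P_t(x,y)). Then both A*_{r,g}(Ξ, 8·P_t(x,y)) and B*_{r,g}(Ξ, 8·P_t(x,y)) are algebraic integers lying in the field ℚ(i√t) = ℚ(√−t). -/

import Mathlib

/-- The quartic form `P_t(x,y) = x^4 + 4t x^3 y - 6t x^2 y^2 - 4t^2 x y^3 + t^2 y^4`. -/
def Pquartic (t x y : ℤ) : ℤ :=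
  x ^ 4 + 4 * t * x ^ 3 * y - 6 * t * x ^ 2 * y ^ 2 - 4 * t ^ 2 * x * y ^ 3 + t ^ 2 * y ^ 4

/-- The generalized binomial coefficient `C(α, m) = α(α-1)⋯(α-m+1)/m!`. -/
noncomputable def genChoose (α : ℝ) (m : ℕ) : ℝ :=
  (∏ i ∈ Finset.range m, (α - i)) / m.factorial

/-- The homogenized polynomial
`A*_{r,g}(X,Y) = Σ_{m=0}^{r} C(r-g+1/4, m) C(2r-g-m, r-g) (-1)^m X^{r-m} Y^m`. -/
noncomputable def AstarPoly (r g : ℕ) (X Y : ℂ) : ℂ :=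
  ∑ m ∈ Finset.range (r + 1),
    ((genChoose ((r : ℝ) - g + 1/4) m *
      genChoose (2 * (r : ℝ) - g - m) (r - g) : ℝ) : ℂ) * (-1) ^ m * X ^ (r - m) * Y ^ m

/-- The homogenized polynomial
`B*_{r,g}(X,Y) = Σ_{m=0}^{r-g} C(r-1/4, m) C(2r-g-m, r) (-1)^m X^{r-g-m} Y^m`. -/
noncomputable def BstarPoly (r g : ℕ) (X Y : ℂ) : ℂ :=
  ∑ m ∈ Finset.range (r - g + 1),
    ((genChoose ((r : ℝ) - 1/4) m *
      genChoose (2 * (r : ℝ) - g - m) r : ℝ) : ℂ) * (-1) ^ m * X ^ (r - g - m) * Y ^ m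

open Finset Polynomial

/-- `m!` divides any product of `m` consecutive descending integers. -/
lemma factorial_dvd_prod_range_sub (b : ℤ) (m : ℕ) :
    (m.factorial : ℤ) ∣ ∏ i ∈ Finset.range m, (b - i) := by
  have h : ∏ i ∈ Finset.range m, (b - i) = (descPochhammer ℤ m).smeval b := by
    induction m with
    | zero => simp [descPochhammer_zero, Polynomial.smeval_one]
    | succ k ih =>
        rw [Finset.prod_range_succ, ih, descPochhammer_succ_right, Polynomial.smeval_mul,
          Polynomial.smeval_sub, Polynomial.smeval_X, Polynomial.smeval_natCast]
        push_cast
        ring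
  rw [h, Ring.descPochhammer_eq_factorial_smul_choose]
  exact ⟨Ring.choose b m, nsmul_eq_mul m.factorial (Ring.choose b m)⟩

/-- The odd part: if `q` is odd and divides `m!` then `q` divides `∏ (a - 4i)`. -/
lemma odd_dvd_prod (a : ℤ) (m : ℕ) (q : ℕ) (hq : q ∣ m.factorial) (hodd : ¬ (2 ∣ q)) :
    (q : ℤ) ∣ ∏ i ∈ Finset.range m, (a - 4 * i) := by
  have hq0 : q ≠ 0 := by rintro rfl; exact hodd ⟨0, rfl⟩
  haveI : NeZero q := ⟨hq0⟩
  have hcop : IsCoprime ((4 : ℕ) : ℤ) ((q : ℕ) : ℤ) := by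
    rw [Nat.isCoprime_iff_coprime]
    have h2 : Nat.Coprime 2 q := (Nat.prime_two.coprime_iff_not_dvd).mpr hodd
    have := Nat.Coprime.pow_left 2 h2
    simpa [show (2:ℕ)^2 = 4 by norm_num] using this
  obtain ⟨u, v, huv⟩ := hcop
  have hu : ((u : ZMod q)) * 4 = 1 := by
    have h1 := congrArg (Int.cast : ℤ → ZMod q) huv
    push_cast at h1
    rwa [ZMod.natCast_self, mul_zero, add_zero] at h1
  rw [← ZMod.intCast_zmod_eq_zero_iff_dvd]
  push_cast
  have hstep : (∏ i ∈ Finset.range m, ((a : ZMod q) - 4 * i))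
      = 4 ^ m * (((∏ i ∈ Finset.range m, (u * a - i) : ℤ)) : ZMod q) := by
    push_cast
    calc ∏ i ∈ Finset.range m, ((a : ZMod q) - 4 * i)
        = ∏ i ∈ Finset.range m, ((4 : ZMod q) * ((u : ZMod q) * a - i)) :=
          Finset.prod_congr rfl fun i _ => by linear_combination (-(a : ZMod q)) * hu
      _ = (∏ _i ∈ Finset.range m, (4 : ZMod q)) *
            ∏ i ∈ Finset.range m, ((u : ZMod q) * a - i) := Finset.prod_mul_distrib
      _ = 4 ^ m * ∏ i ∈ Finset.range m, ((u : ZMod q) * a - i) := by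
          rw [Finset.prod_const, Finset.card_range]
  rw [hstep]
  have hdvd : (q : ℤ) ∣ ∏ i ∈ Finset.range m, (u * a - i) :=
    dvd_trans (Int.natCast_dvd_natCast.mpr hq) (factorial_dvd_prod_range_sub (u * a) m)
  rw [(ZMod.intCast_zmod_eq_zero_iff_dvd _ q).mpr hdvd, mul_zero]

/-- Key divisibility: `4^m · m!` divides `2^(3m) · ∏_{i<m} (a - 4i)`. -/
lemma key_dvd (a : ℤ) (m : ℕ) :
    ((4 : ℤ) ^ m * m.factorial) ∣ 2 ^ (3 * m) * ∏ i ∈ Finset.range m, (a - 4 * i) := by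
  haveI : Fact (Nat.Prime 2) := ⟨Nat.prime_two⟩
  set e := (m.factorial).factorization 2 with he_def
  set q := ordCompl[2] (m.factorial) with hq_def
  have hsplit : 2 ^ e * q = m.factorial := Nat.ordProj_mul_ordCompl_eq_self _ 2
  have hq2 : ¬ (2 ∣ q) := Nat.not_dvd_ordCompl Nat.prime_two (Nat.factorial_ne_zero m)
  have he : e ≤ m := by
    have h1 := sub_one_mul_padicValNat_factorial (p := 2) m
    have h2 : (m.factorial).factorization 2 = padicValNat 2 (m.factorial) := by
      rw [Nat.factorization_def _ Nat.prime_two]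
    omega
  have hqdvd : (q : ℤ) ∣ ∏ i ∈ Finset.range m, (a - 4 * i) :=
    odd_dvd_prod a m q (Dvd.intro_left _ hsplit) hq2
  have hfac : ((4 : ℤ) ^ m * m.factorial) = 2 ^ (2 * m + e) * q := by
    have := congrArg (Nat.cast : ℕ → ℤ) hsplit
    push_cast at this
    rw [← this, pow_add, pow_mul]
    ring
  rw [hfac]
  exact mul_dvd_mul (pow_dvd_pow 2 (by omega)) hqdvd

/-- `genChoose` at a quarter-integer as an explicit quotient. -/
lemma genChoose_quarter (a : ℤ) (m : ℕ) :
    genChoose ((a : ℝ) / 4) m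
      = ((∏ i ∈ Finset.range m, (a - 4 * i) : ℤ) : ℝ) / (4 ^ m * m.factorial) := by
  unfold genChoose
  have h : ∏ i ∈ Finset.range m, ((a : ℝ) / 4 - i)
      = ((∏ i ∈ Finset.range m, (a - 4 * i) : ℤ) : ℝ) / 4 ^ m := by
    push_cast
    calc ∏ i ∈ Finset.range m, ((a : ℝ) / 4 - i)
        = ∏ i ∈ Finset.range m, (((a : ℝ) - 4 * i) / 4) :=
          Finset.prod_congr rfl fun i _ => by ring
      _ = (∏ i ∈ Finset.range m, ((a : ℝ) - 4 * i)) / ∏ _i ∈ Finset.range m, (4 : ℝ) :=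
          Finset.prod_div_distrib _ _
      _ = (∏ i ∈ Finset.range m, ((a : ℝ) - 4 * i)) / 4 ^ m := by
          rw [Finset.prod_const, Finset.card_range]
  rw [h, div_div]

/-- `genChoose` at a natural number is `Nat.choose`. -/
lemma genChoose_natCast (N k : ℕ) (h : k ≤ N) :
    genChoose (N : ℝ) k = N.choose k := by
  unfold genChoose
  have hprod : ∀ j : ℕ, j ≤ N → ∏ i ∈ Finset.range j, ((N : ℝ) - i) = (N.descFactorial j : ℝ) := by
    intro j
    induction j with
    | zero => simp
    | succ k ih =>
        intro hk
        rw [Finset.prod_range_succ, ih (by omega), Nat.descFactorial_succ]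
        push_cast [Nat.cast_sub (by omega : k ≤ N)]
        ring
  rw [hprod k h, Nat.descFactorial_eq_factorial_mul_choose,
    div_eq_iff (by exact_mod_cast Nat.factorial_ne_zero k)]
  push_cast
  ring

/-- Coefficient integrality for `A*`. -/
lemma coeffA (r g m : ℕ) (hgr : g ≤ r) (hm : m ≤ r) :
    ∃ K : ℤ, genChoose ((r : ℝ) - g + 1/4) m * genChoose (2 * (r : ℝ) - g - m) (r - g)
      = (K : ℝ) / 2 ^ (2 * r + m) := by
  set a : ℤ := 4 * ((r : ℤ) - g) + 1 with ha
  have h1 : (r : ℝ) - g + 1/4 = (a : ℝ) / 4 := by rw [ha]; push_cast; ring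
  set N : ℕ := 2 * r - g - m with hN
  have h2 : 2 * (r : ℝ) - g - m = (N : ℝ) := by
    have hg2 : g ≤ 2 * r := by omega
    have hm2 : m ≤ 2 * r - g := by omega
    rw [hN, Nat.cast_sub hm2, Nat.cast_sub hg2]
    push_cast; ring
  have hkN : r - g ≤ N := by omega
  rw [h1, h2, genChoose_quarter, genChoose_natCast N (r - g) hkN]
  obtain ⟨D, hD⟩ : ((4 : ℤ) ^ m * m.factorial) ∣
      (2 ^ (3 * m) * ∏ i ∈ Finset.range m, (a - 4 * i)) * (N.choose (r - g) : ℤ) :=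
    Dvd.dvd.mul_right (key_dvd a m) _
  refine ⟨2 ^ (2 * (r - m)) * D, ?_⟩
  have hcast : ((2 : ℝ) ^ (3 * m) * (∏ i ∈ Finset.range m, ((a : ℝ) - 4 * i)))
      * (N.choose (r - g) : ℝ) = 4 ^ m * m.factorial * D := by
    have := congrArg (Int.cast : ℤ → ℝ) hD
    push_cast at this ⊢
    linarith [this]
  have hne1 : ((4 : ℝ) ^ m * m.factorial) ≠ 0 := by positivity
  have hne2 : ((2 : ℝ) ^ (2 * r + m)) ≠ 0 := by positivity
  rw [div_mul_eq_mul_div, div_eq_div_iff hne1 hne2]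
  have hexp : 2 * r + m = 2 * (r - m) + 3 * m := by omega
  rw [hexp, pow_add]
  push_cast
  push_cast at hcast
  linear_combination (2 : ℝ) ^ (2 * (r - m)) * hcast

/-- Coefficient integrality for `B*`. -/
lemma coeffB (r g m : ℕ) (hgr : g ≤ r) (hm : m ≤ r - g) :
    ∃ K : ℤ, genChoose ((r : ℝ) - 1/4) m * genChoose (2 * (r : ℝ) - g - m) r
      = (K : ℝ) / 2 ^ (2 * (r - g) + m) := by
  set a : ℤ := 4 * (r : ℤ) - 1 with ha
  have h1 : (r : ℝ) - 1/4 = (a : ℝ) / 4 := by rw [ha]; push_cast; ring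
  set N : ℕ := 2 * r - g - m with hN
  have h2 : 2 * (r : ℝ) - g - m = (N : ℝ) := by
    have hg2 : g ≤ 2 * r := by omega
    have hm2 : m ≤ 2 * r - g := by omega
    rw [hN, Nat.cast_sub hm2, Nat.cast_sub hg2]
    push_cast; ring
  have hkN : r ≤ N := by omega
  rw [h1, h2, genChoose_quarter, genChoose_natCast N r hkN]
  obtain ⟨D, hD⟩ : ((4 : ℤ) ^ m * m.factorial) ∣
      (2 ^ (3 * m) * ∏ i ∈ Finset.range m, (a - 4 * i)) * (N.choose r : ℤ) :=
    Dvd.dvd.mul_right (key_dvd a m) _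
  refine ⟨2 ^ (2 * (r - g - m)) * D, ?_⟩
  have hcast : ((2 : ℝ) ^ (3 * m) * (∏ i ∈ Finset.range m, ((a : ℝ) - 4 * i)))
      * (N.choose r : ℝ) = 4 ^ m * m.factorial * D := by
    have := congrArg (Int.cast : ℤ → ℝ) hD
    push_cast at this ⊢
    linarith [this]
  have hne1 : ((4 : ℝ) ^ m * m.factorial) ≠ 0 := by positivity
  have hne2 : ((2 : ℝ) ^ (2 * (r - g) + m)) ≠ 0 := by positivity
  rw [div_mul_eq_mul_div, div_eq_div_iff hne1 hne2]
  have hexp : 2 * (r - g) + m = 2 * (r - g - m) + 3 * m := by omega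
  rw [hexp, pow_add]
  push_cast
  push_cast at hcast
  linear_combination (2 : ℝ) ^ (2 * (r - g - m)) * hcast

lemma pow_in_Zw (t : ℕ) (w : ℂ) (hw2 : w ^ 2 = -(t : ℂ)) (P Q : ℤ) (k : ℕ) :
    ∃ A B : ℤ, ((P : ℂ) + w * Q) ^ k = (A : ℂ) + (B : ℂ) * w := by
  induction k with
  | zero => exact ⟨1, 0, by norm_num⟩
  | succ n ih =>
      obtain ⟨A, B, hAB⟩ := ih
      refine ⟨A * P - t * B * Q, A * Q + B * P, ?_⟩
      rw [pow_succ, hAB]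
      push_cast
      linear_combination ((B : ℂ) * Q) * hw2

lemma sum_in_Zw (w : ℂ) (s : Finset ℕ) (f : ℕ → ℂ)
    (h : ∀ m ∈ s, ∃ a b : ℤ, f m = (a : ℂ) + (b : ℂ) * w) :
    ∃ a b : ℤ, ∑ m ∈ s, f m = (a : ℂ) + (b : ℂ) * w := by
  classical
  induction s using Finset.induction_on with
  | empty => exact ⟨0, 0, by simp⟩
  | insert _ _ hx ih =>
      obtain ⟨a, b, hab⟩ := h _ (Finset.mem_insert_self _ _)
      obtain ⟨c, d, hcd⟩ := ih (fun m hm => h m (Finset.mem_insert_of_mem hm))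
      exact ⟨a + c, b + d, by rw [Finset.sum_insert hx, hab, hcd]; push_cast; ring⟩


/-- With `Ξ = ξ(x,y)^4 = 4(i√t + 1)(x - i√t y)^4`, both
`A*_{r,g}(Ξ, 8 P_t(x,y))` and `B*_{r,g}(Ξ, 8 P_t(x,y))` are algebraic integers
lying in the imaginary quadratic field `ℚ(i√t) = ℚ(√-t)`. -/
theorem Astar_Bstar_algebraic_integers (t : ℕ) (ht : 0 < t)
    (r : ℕ) (hr : 0 < r) (g : ℕ) (hg : g = 0 ∨ g = 1) (x y : ℤ)
    (Ξ : ℂ)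
    (hΞ : Ξ = 4 * (Complex.I * (Real.sqrt t : ℂ) + 1) *
      ((x : ℂ) - Complex.I * (Real.sqrt t : ℂ) * (y : ℂ)) ^ 4) :
    (IsIntegral ℤ (AstarPoly r g Ξ ((8 * Pquartic t x y : ℤ) : ℂ)) ∧
      ∃ a b : ℚ, AstarPoly r g Ξ ((8 * Pquartic t x y : ℤ) : ℂ) =
        (a : ℂ) + (b : ℂ) * (Complex.I * (Real.sqrt t : ℂ))) ∧
    (IsIntegral ℤ (BstarPoly r g Ξ ((8 * Pquartic t x y : ℤ) : ℂ)) ∧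
      ∃ a b : ℚ, BstarPoly r g Ξ ((8 * Pquartic t x y : ℤ) : ℂ) =
        (a : ℂ) + (b : ℂ) * (Complex.I * (Real.sqrt t : ℂ))) := by
  have hg1 : g ≤ 1 := by rcases hg with h | h <;> omega
  have hgr : g ≤ r := le_trans hg1 hr
  set w : ℂ := Complex.I * (Real.sqrt t : ℂ) with hw
  have hw2 : w ^ 2 = -(t : ℂ) := by
    rw [hw, mul_pow, Complex.I_sq]
    have hs : (Real.sqrt t : ℝ) ^ 2 = (t : ℝ) := Real.sq_sqrt (by positivity)
    rw [← Complex.ofReal_pow, hs]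
    push_cast
    ring
  set P : ℤ := Pquartic t x y with hP
  set Q : ℤ := x ^ 4 - 4 * x ^ 3 * y - 6 * (t : ℤ) * x ^ 2 * y ^ 2 + 4 * (t : ℤ) * x * y ^ 3
      + (t : ℤ) ^ 2 * y ^ 4 with hQ
  have hXi : Ξ = 4 * ((P : ℂ) + w * Q) := by
    rw [hΞ, hP, hQ]
    unfold Pquartic
    push_cast
    linear_combination (4 * ((y : ℂ) ^ 4 * w ^ 3 + ((y : ℂ) ^ 4 - 4 * x * y ^ 3) * w ^ 2
      + (6 * (x : ℂ) ^ 2 * y ^ 2 - 4 * x * y ^ 3 - t * y ^ 4) * w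
      + (-4 * (x : ℂ) ^ 3 * y + 6 * x ^ 2 * y ^ 2 + 4 * t * x * y ^ 3 - t * y ^ 4))) * hw2
  have hwint : IsIntegral ℤ w := by
    refine ⟨Polynomial.X ^ 2 + Polynomial.C (t : ℤ),
      Polynomial.monic_X_pow_add_C _ (by norm_num), ?_⟩
    have heval : Polynomial.eval₂ (algebraMap ℤ ℂ) w
        (Polynomial.X ^ 2 + Polynomial.C (t : ℤ)) = w ^ 2 + (t : ℂ) := by
      simp [Polynomial.eval₂_add, Polynomial.eval₂_X_pow, Polynomial.eval₂_C]
    rw [heval, hw2]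
    ring
  have hmem : ∀ a b : ℤ, IsIntegral ℤ ((a : ℂ) + (b : ℂ) * w) := by
    intro a b
    have ha : IsIntegral ℤ ((a : ℂ)) := by
      simpa [algebraMap_int_eq] using isIntegral_algebraMap (R := ℤ) (A := ℂ) (x := a)
    have hb : IsIntegral ℤ ((b : ℂ)) := by
      simpa [algebraMap_int_eq] using isIntegral_algebraMap (R := ℤ) (A := ℂ) (x := b)
    exact ha.add (hb.mul hwint)
  have keyA : ∃ a b : ℤ, AstarPoly r g Ξ ((8 * P : ℤ) : ℂ) = (a : ℂ) + (b : ℂ) * w := by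
    unfold AstarPoly
    refine sum_in_Zw w _ _ (fun m hm => ?_)
    have hmr : m ≤ r := by
      have := Finset.mem_range.mp hm; omega
    obtain ⟨K, hK⟩ := coeffA r g m hgr hmr
    obtain ⟨A, B, hAB⟩ := pow_in_Zw t w hw2 P Q (r - m)
    refine ⟨(-1) ^ m * K * A * P ^ m, (-1) ^ m * K * B * P ^ m, ?_⟩
    rw [hK, hXi, mul_pow, hAB]
    have h2ne : ((2 : ℂ)) ^ (2 * r + m) ≠ 0 := pow_ne_zero _ two_ne_zero
    have hpow : (4 : ℂ) ^ (r - m) * 8 ^ m = 2 ^ (2 * r + m) := by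
      have h : 2 * r + m = 2 * (r - m) + 3 * m := by omega
      rw [h, pow_add, pow_mul, pow_mul]
      norm_num
    push_cast
    rw [div_mul_eq_mul_div, div_mul_eq_mul_div, div_mul_eq_mul_div, div_eq_iff h2ne]
    linear_combination ((-1 : ℂ)) ^ m * K * ((A : ℂ) + B * w) * (P : ℂ) ^ m * hpow
  have keyB : ∃ a b : ℤ, BstarPoly r g Ξ ((8 * P : ℤ) : ℂ) = (a : ℂ) + (b : ℂ) * w := by
    unfold BstarPoly
    refine sum_in_Zw w _ _ (fun m hm => ?_)
    have hmr : m ≤ r - g := by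
      have := Finset.mem_range.mp hm; omega
    obtain ⟨K, hK⟩ := coeffB r g m hgr hmr
    obtain ⟨A, B, hAB⟩ := pow_in_Zw t w hw2 P Q (r - g - m)
    refine ⟨(-1) ^ m * K * A * P ^ m, (-1) ^ m * K * B * P ^ m, ?_⟩
    rw [hK, hXi, mul_pow, hAB]
    have h2ne : ((2 : ℂ)) ^ (2 * (r - g) + m) ≠ 0 := pow_ne_zero _ two_ne_zero
    have hpow : (4 : ℂ) ^ (r - g - m) * 8 ^ m = 2 ^ (2 * (r - g) + m) := by
      have h : 2 * (r - g) + m = 2 * (r - g - m) + 3 * m := by omega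
      rw [h, pow_add, pow_mul, pow_mul]
      norm_num
    push_cast
    rw [div_mul_eq_mul_div, div_mul_eq_mul_div, div_mul_eq_mul_div, div_eq_iff h2ne]
    linear_combination ((-1 : ℂ)) ^ m * K * ((A : ℂ) + B * w) * (P : ℂ) ^ m * hpow
  obtain ⟨a1, b1, h1⟩ := keyA
  obtain ⟨a2, b2, h2⟩ := keyB
  refine ⟨⟨by rw [h1]; exact hmem a1 b1, ⟨(a1 : ℚ), (b1 : ℚ), by rw [h1]; push_cast; ring⟩⟩,
    ⟨by rw [h2]; exact hmem a2 b2, ⟨(a2 : ℚ), (b2 : ℚ), by rw [h2]; push_cast; ring⟩⟩⟩
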